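/- (Brown–Kosaki trace inequality, finite-dimensional case) Let f : ℝ → ℝ be a convex function with f(0) ≤ 0, let A be an n×n Hermitian complex matrix, and let Z be an n×n complex matrix which is a contraction (operator norm at most 1). Then Tr f(Zᴴ A Z) ≤ Tr (Zᴴ f(A) Z). -/

import Mathlib

open Matrix

/-- The `j`-th largest eigenvalue of a Hermitian matrix (`0`-indexed, so `eigDesc hA ⟨0, _⟩`
is the largest), counted with multiplicity. -/
noncomputable def eigDesc {n : ℕ} {A : Matrix (Fin n) (Fin n) ℂ} (hA : A.IsHermitian)
    (j : Fin n) : ℝ :=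
  hA.eigenvalues (Tuple.sort hA.eigenvalues j.rev)

/-- Applying a real function to a Hermitian matrix via the functional calculus yields a
Hermitian matrix. -/
lemma isHermitian_cfc {n : ℕ} {A : Matrix (Fin n) (Fin n) ℂ} (hA : A.IsHermitian)
    (f : ℝ → ℝ) : (hA.cfc f).IsHermitian := by
  rw [← hA.cfc_eq]
  exact cfc_predicate f A

lemma isHermitian_half_smul {n : ℕ} {X : Matrix (Fin n) (Fin n) ℂ} (hX : X.IsHermitian) :
    ((2 : ℝ)⁻¹ • X).IsHermitian := by
  show _ = _
  rw [Matrix.conjTranspose_smul, star_trivial, hX.eq]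

lemma isHermitian_sum_conj {m n : ℕ} {A : Fin m → Matrix (Fin n) (Fin n) ℂ}
    (Z : Fin m → Matrix (Fin n) (Fin n) ℂ) (hA : ∀ i, (A i).IsHermitian) :
    (∑ i, (Z i)ᴴ * A i * Z i).IsHermitian := by
  show _ = _
  rw [Matrix.conjTranspose_sum]
  exact Finset.sum_congr rfl fun i _ => (isHermitian_conjTranspose_mul_mul (Z i) (hA i)).eq

open scoped ComplexOrder

lemma jensen_aux {ι : Type*} [Fintype ι] {f : ℝ → ℝ} (hf : ConvexOn ℝ Set.univ f)
    (hf0 : f 0 ≤ 0) (p μ : ι → ℝ) (hp : ∀ i, 0 ≤ p i) (hps : ∑ i, p i ≤ 1) :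
    f (∑ i, p i * μ i) ≤ ∑ i, p i * f (μ i) := by
  set w : Option ι → ℝ := fun o => o.elim (1 - ∑ i, p i) p with hw
  set z : Option ι → ℝ := fun o => o.elim 0 μ with hz
  have h0 : ∀ o ∈ Finset.univ, 0 ≤ w o := by
    rintro (_|i) _
    · simpa [hw] using hps
    · exact hp i
  have h1 : ∑ o : Option ι, w o = 1 := by
    rw [Fintype.sum_option]; simp [hw]
  have key := hf.map_sum_le h0 h1 (fun o _ => Set.mem_univ (z o))
  rw [Fintype.sum_option, Fintype.sum_option] at key
  simp only [hw, hz, Option.elim, smul_eq_mul, mul_zero, zero_add] at key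
  refine key.trans ?_
  nlinarith [mul_nonneg (sub_nonneg.2 hps) (neg_nonneg.2 hf0)]


/-- **Brown–Kosaki trace inequality** (finite-dimensional case): if `f` is convex with
`f 0 ≤ 0`, `A` is Hermitian and `Z` is a contraction (`Zᴴ Z ≤ I`), then
`Tr f(Zᴴ A Z) ≤ Tr (Zᴴ f(A) Z)`. -/
theorem trace_cfc_contraction_le
    {n : ℕ} (f : ℝ → ℝ) (hf : ConvexOn ℝ Set.univ f) (hf0 : f 0 ≤ 0)
    (A : Matrix (Fin n) (Fin n) ℂ) (hA : A.IsHermitian)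
    (Z : Matrix (Fin n) (Fin n) ℂ) (hZ : (1 - Zᴴ * Z).PosSemidef) :
    ((isHermitian_conjTranspose_mul_mul Z hA).cfc f).trace ≤
      (Zᴴ * hA.cfc f * Z).trace := by
  
  set hB := isHermitian_conjTranspose_mul_mul Z hA with hBdef
  set V : Matrix (Fin n) (Fin n) ℂ := ↑hA.eigenvectorUnitary with hVdef
  set U : Matrix (Fin n) (Fin n) ℂ := ↑hB.eigenvectorUnitary with hUdef
  set W : Matrix (Fin n) (Fin n) ℂ := star V * Z * U with hWdef
  set μ := hA.eigenvalues with hμdef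
  set ν := hB.eigenvalues with hνdef
  set p : Fin n → Fin n → ℝ := fun i j => Complex.normSq (W i j) with hpdef
  have hU1 : star U * U = 1 := mem_unitaryGroup_iff'.mp (hB.eigenvectorUnitary).2
  have hU2 : U * star U = 1 := mem_unitaryGroup_iff.mp (hB.eigenvectorUnitary).2
  have hV2 : V * star V = 1 := mem_unitaryGroup_iff.mp (hA.eigenvectorUnitary).2
  -- entrywise formula
  have entry : ∀ (d : Fin n → ℝ) j, (Wᴴ * diagonal (Complex.ofReal ∘ d) * W) j j
      = ((∑ i, d i * p i j : ℝ) : ℂ) := by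
    intro d j
    rw [Matrix.mul_apply, Complex.ofReal_sum]
    refine Finset.sum_congr rfl fun i _ => ?_
    rw [Matrix.mul_diagonal, Matrix.conjTranspose_apply, Complex.ofReal_mul, hpdef,
      Complex.normSq_eq_conj_mul_self, Complex.star_def]
    simp only [Function.comp_apply]
    ring
  -- conjugation identity
  have KW : ∀ (d : Fin n → ℝ), Wᴴ * diagonal (Complex.ofReal ∘ d) * W
      = star U * (Zᴴ * (V * diagonal (Complex.ofReal ∘ d) * star V) * Z) * U := by
    intro d
    simp only [hWdef, Matrix.conjTranspose_mul, Matrix.conjTranspose_conjTranspose,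
      Matrix.star_eq_conjTranspose, Matrix.mul_assoc]
  have hsp : A = V * diagonal (Complex.ofReal ∘ μ) * star V := hA.spectral_theorem
  have hdiagν : Wᴴ * diagonal (Complex.ofReal ∘ μ) * W = diagonal (Complex.ofReal ∘ ν) := by
    rw [KW μ, ← hsp]
    have h := hB.conjStarAlgAut_star_eigenvectorUnitary
    simp only [Unitary.conjStarAlgAut_apply, Unitary.coe_star, star_star] at h
    exact h
  have hν : ∀ j, ν j = ∑ i, μ i * p i j := by
    intro j
    have h := congrFun (congrFun hdiagν j) j
    rw [entry μ j, Matrix.diagonal_apply_eq] at h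
    simp only [Function.comp_apply] at h
    exact_mod_cast h.symm
  -- LHS trace
  have hLHS : (hB.cfc f).trace = ((∑ j, f (ν j) : ℝ) : ℂ) := by
    rw [Matrix.IsHermitian.cfc, Unitary.conjStarAlgAut_apply, Matrix.trace_mul_cycle, ← hUdef, hU1, one_mul,
      Matrix.trace_diagonal, ← hνdef, Complex.ofReal_sum]
    rfl
  -- RHS trace
  have hRHS : (Zᴴ * hA.cfc f * Z).trace = ((∑ j, ∑ i, f (μ i) * p i j : ℝ) : ℂ) := by
    have h1 : (Zᴴ * hA.cfc f * Z).trace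
        = (Wᴴ * diagonal (Complex.ofReal ∘ (f ∘ μ)) * W).trace := by
      conv_rhs => rw [KW (f ∘ μ), Matrix.trace_mul_cycle]
      rw [hU2, one_mul, Matrix.IsHermitian.cfc]
      rfl
    rw [h1, Matrix.trace, Complex.ofReal_sum]
    refine Finset.sum_congr rfl fun j _ => ?_
    rw [Matrix.diag_apply, entry (f ∘ μ) j]
    rfl
  -- column mass
  have hone : (Complex.ofReal ∘ fun _ : Fin n => (1:ℝ)) = fun _ => (1:ℂ) := by
    funext i; simp
  have hWW : ∀ j, ((Wᴴ * W) j j) = ((∑ i, p i j : ℝ) : ℂ) := by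
    intro j
    have h := entry (fun _ => (1:ℝ)) j
    rw [hone, Matrix.diagonal_one, Matrix.mul_one] at h
    simpa using h
  have hWWm : Wᴴ * W = star U * (Zᴴ * Z) * U := by
    have h2 := KW (fun _ => (1:ℝ))
    simp only [hone, Matrix.diagonal_one, Matrix.mul_one, hV2] at h2
    exact h2
  have hpsd : (1 - Wᴴ * W).PosSemidef := by
    have h := hZ.conjTranspose_mul_mul_same U
    have hU1' : Uᴴ * U = 1 := hU1
    have e : Uᴴ * (1 - Zᴴ * Z) * U = 1 - Wᴴ * W := by
      rw [Matrix.mul_sub, Matrix.sub_mul, Matrix.mul_one, hU1', hWWm]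
      rfl
    rwa [e] at h
  have hsum : ∀ j, ∑ i, p i j ≤ 1 := by
    intro j
    have h := hpsd.dotProduct_mulVec_nonneg (Pi.single j 1)
    have h3 : (0:ℂ) ≤ 1 - (Wᴴ * W) j j := by
      simpa [dotProduct, Matrix.mulVec, Pi.single_apply, Matrix.sub_apply,
        Matrix.one_apply, apply_ite, mul_ite, ite_mul, Finset.sum_ite_eq, Finset.sum_ite_eq']
        using h
    rw [hWW j] at h3
    exact_mod_cast sub_nonneg.mp h3
  -- conclude
  rw [hLHS, hRHS, Complex.real_le_real]
  refine Finset.sum_le_sum fun j _ => ?_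
  rw [hν j]
  have := jensen_aux hf hf0 (fun i => p i j) μ (fun i => Complex.normSq_nonneg _) (hsum j)
  simpa [mul_comm] using this
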